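/- Let k be a field of characteristic ≠ 2. For every λ ∈ k^* (i.e. λ ≠ 0), the Hopf algebras H_{16,λ} and H_{16,1} are isomorphic; an isomorphism is obtained by sending X to λ^{-1}X and fixing g, x, G. -/

import Mathlib

open TensorProduct

noncomputable section

/-- `E` is (a model of) the Hopf algebra `𝓗_{16, λ}`: it is generated by `g`, `x`, `G`, `X`
subject to the relations `g² = G² = 1`, `x² = X² = 0`, `gx = -xg`, `GX = -XG`, `gG = Gg`,
`gX = -Xg`, `xG = -Gx`, `xX + Xx = λ(1 - Gg)`, the sixteen products of elements of
`{1, G, X, GX}` with elements of `{1, g, x, gx}` form a basis of `E`, the elements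
`g`, `G` are group-like, `x` is `(1, g)`-primitive and `X` is `(1, G)`-primitive. -/
structure IsH16 (k : Type*) [CommRing k] (E : Type*) [Ring E] [HopfAlgebra k E]
    (g x G X : E) (lam : k) : Prop where
  g_sq : g * g = 1
  G_sq : G * G = 1
  x_sq : x * x = 0
  X_sq : X * X = 0
  gx_eq : g * x = -(x * g)
  GX_eq : G * X = -(X * G)
  gG_comm : g * G = G * g
  gX_anticomm : g * X = -(X * g)
  xG_anticomm : x * G = -(G * x)
  xX_rel : x * X + X * x = lam • ((1 : E) - G * g)
  li : LinearIndependent k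
    (fun p : Fin 4 × Fin 4 => ![(1 : E), G, X, G * X] p.1 * ![(1 : E), g, x, g * x] p.2)
  span : Submodule.span k
    (Set.range (fun p : Fin 4 × Fin 4 =>
      ![(1 : E), G, X, G * X] p.1 * ![(1 : E), g, x, g * x] p.2)) = ⊤
  comul_g : Coalgebra.comul (R := k) g = g ⊗ₜ[k] g
  comul_G : Coalgebra.comul (R := k) G = G ⊗ₜ[k] G
  comul_x : Coalgebra.comul (R := k) x = x ⊗ₜ[k] (1 : E) + g ⊗ₜ[k] x
  comul_X : Coalgebra.comul (R := k) X = X ⊗ₜ[k] (1 : E) + G ⊗ₜ[k] X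
  counit_g : Coalgebra.counit (R := k) g = 1
  counit_G : Coalgebra.counit (R := k) G = 1
  counit_x : Coalgebra.counit (R := k) x = 0
  counit_X : Coalgebra.counit (R := k) X = 0

namespace IsH16

variable {k : Type*} [CommRing k] {E : Type*} [Ring E] [HopfAlgebra k E]
  {g x G X : E} {lam : k} (h : IsH16 k E g x G X lam)

include h

lemma gg' (y : E) : g * (g * y) = y := by rw [← mul_assoc, h.g_sq, one_mul]
lemma GG' (y : E) : G * (G * y) = y := by rw [← mul_assoc, h.G_sq, one_mul]
lemma xx' (y : E) : x * (x * y) = 0 := by rw [← mul_assoc, h.x_sq, zero_mul]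
lemma XX' (y : E) : X * (X * y) = 0 := by rw [← mul_assoc, h.X_sq, zero_mul]

lemma xg : x * g = -(g * x) := by rw [h.gx_eq, neg_neg]
lemma xg' (y : E) : x * (g * y) = -(g * (x * y)) := by
  rw [← mul_assoc, h.xg, neg_mul, mul_assoc]
lemma gX' (y : E) : g * (X * y) = -(X * (g * y)) := by
  rw [← mul_assoc, h.gX_anticomm, neg_mul, mul_assoc]
lemma XG : X * G = -(G * X) := by rw [h.GX_eq, neg_neg]
lemma XG' (y : E) : X * (G * y) = -(G * (X * y)) := by
  rw [← mul_assoc, h.XG, neg_mul, mul_assoc]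
lemma gG' (y : E) : g * (G * y) = G * (g * y) := by
  rw [← mul_assoc, h.gG_comm, mul_assoc]
lemma xG' (y : E) : x * (G * y) = -(G * (x * y)) := by
  rw [← mul_assoc, h.xG_anticomm, neg_mul, mul_assoc]
lemma xX : x * X = lam • (1 : E) - lam • (G * g) - X * x := by
  rw [← smul_sub, eq_sub_iff_add_eq, h.xX_rel]

lemma xX' (y : E) : x * (X * y) = lam • y - lam • (G * (g * y)) - X * (x * y) := by
  rw [← mul_assoc, h.xX, sub_mul, sub_mul, smul_mul_assoc, smul_mul_assoc, one_mul,
    mul_assoc, mul_assoc]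

/-- The basis of 16 monomials. -/
def basis : Module.Basis (Fin 4 × Fin 4) k E := Module.Basis.mk h.li (by rw [h.span])

lemma basis_apply (p : Fin 4 × Fin 4) :
    h.basis p = ![(1 : E), G, X, G * X] p.1 * ![(1 : E), g, x, g * x] p.2 :=
  Module.Basis.mk_apply _ _ _

end IsH16

set_option maxHeartbeats 1600000 in
/-- For every `λ ∈ kˣ` (char `k ≠ 2`), the Hopf algebras `𝓗_{16, λ}` and `𝓗_{16, 1}` are
isomorphic; an isomorphism is obtained by sending `X` to `λ⁻¹ X` and fixing `g, x, G`. -/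
theorem h16_iso_of_ne_zero
    {k : Type*} [Field k] (hchar : (2 : k) ≠ 0) {lam : k} (hlam : lam ≠ 0)
    {E : Type*} [Ring E] [HopfAlgebra k E] {g x G X : E}
    (hE : IsH16 k E g x G X lam)
    {F : Type*} [Ring F] [HopfAlgebra k F] {g₁ x₁ G₁ X₁ : F}
    (hF : IsH16 k F g₁ x₁ G₁ X₁ 1) :
    ∃ ψ : F ≃ₐc[k] E,
      ψ g₁ = g ∧ ψ x₁ = x ∧ ψ G₁ = G ∧ ψ X₁ = lam⁻¹ • X := by
  classical
  set bF := hF.basis with hbF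
  set bE := hE.basis with hbE
  set lu : kˣ := Units.mk0 lam hlam with hlu
  set u : Fin 4 × Fin 4 → kˣ := fun p => ![1, 1, lu⁻¹, lu⁻¹] p.1 with hu
  set bE' := bE.unitsSMul u with hbE'
  set φ : F ≃ₗ[k] E := bF.equiv bE' (Equiv.refl _) with hφdef
  have hφ : ∀ p : Fin 4 × Fin 4, φ (bF p) = (u p : k) • bE p := by
    intro p
    rw [hφdef, Module.Basis.equiv_apply, Equiv.refl_apply, hbE', Module.Basis.unitsSMul_apply,
      Units.smul_def]
  -- concrete values
  have hφ1 : φ (1 : F) = 1 := by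
    have := hφ (0, 0)
    simpa [hbF, hbE, hF.basis_apply, hE.basis_apply, hu] using this
  have hφg : φ g₁ = g := by
    have := hφ (0, 1)
    simpa [hbF, hbE, hF.basis_apply, hE.basis_apply, hu] using this
  have hφx : φ x₁ = x := by
    have := hφ (0, 2)
    simpa [hbF, hbE, hF.basis_apply, hE.basis_apply, hu] using this
  have hφgx : φ (g₁ * x₁) = g * x := by
    have := hφ (0, 3)
    simpa [hbF, hbE, hF.basis_apply, hE.basis_apply, hu] using this
  have hφG : φ G₁ = G := by
    have := hφ (1, 0)
    simpa [hbF, hbE, hF.basis_apply, hE.basis_apply, hu] using this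
  have hφGg : φ (G₁ * g₁) = G * g := by
    have := hφ (1, 1)
    simpa [hbF, hbE, hF.basis_apply, hE.basis_apply, hu] using this
  have hφGx : φ (G₁ * x₁) = G * x := by
    have := hφ (1, 2)
    simpa [hbF, hbE, hF.basis_apply, hE.basis_apply, hu] using this
  have hφGgx : φ (G₁ * (g₁ * x₁)) = G * (g * x) := by
    have := hφ (1, 3)
    simpa [hbF, hbE, hF.basis_apply, hE.basis_apply, hu] using this
  have hφX : φ X₁ = lam⁻¹ • X := by
    have := hφ (2, 0)
    simpa [hbF, hbE, hF.basis_apply, hE.basis_apply, hu, hlu] using this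
  have hφXg : φ (X₁ * g₁) = lam⁻¹ • (X * g) := by
    have := hφ (2, 1)
    simpa [hbF, hbE, hF.basis_apply, hE.basis_apply, hu, hlu] using this
  have hφXx : φ (X₁ * x₁) = lam⁻¹ • (X * x) := by
    have := hφ (2, 2)
    simpa [hbF, hbE, hF.basis_apply, hE.basis_apply, hu, hlu] using this
  have hφXgx : φ (X₁ * (g₁ * x₁)) = lam⁻¹ • (X * (g * x)) := by
    have := hφ (2, 3)
    simpa [hbF, hbE, hF.basis_apply, hE.basis_apply, hu, hlu] using this
  have hφGX : φ (G₁ * X₁) = lam⁻¹ • (G * X) := by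
    have := hφ (3, 0)
    simpa [hbF, hbE, hF.basis_apply, hE.basis_apply, hu, hlu] using this
  have hφGXg : φ (G₁ * (X₁ * g₁)) = lam⁻¹ • (G * (X * g)) := by
    have := hφ (3, 1)
    simpa [hbF, hbE, hF.basis_apply, hE.basis_apply, hu, hlu, mul_assoc] using this
  have hφGXx : φ (G₁ * (X₁ * x₁)) = lam⁻¹ • (G * (X * x)) := by
    have := hφ (3, 2)
    simpa [hbF, hbE, hF.basis_apply, hE.basis_apply, hu, hlu, mul_assoc] using this
  have hφGXgx : φ (G₁ * (X₁ * (g₁ * x₁))) = lam⁻¹ • (G * (X * (g * x))) := by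
    have := hφ (3, 3)
    simpa [hbF, hbE, hF.basis_apply, hE.basis_apply, hu, hlu, mul_assoc] using this
  -- simp sets
  have hmulg : ∀ b : F, φ (g₁ * b) = g * φ b := by
    have : (φ.toLinearMap ∘ₗ LinearMap.mulLeft k g₁) =
        (LinearMap.mulLeft k (g) ∘ₗ φ.toLinearMap) := by
      apply bF.ext
      rintro ⟨i, j⟩
      fin_cases i <;> fin_cases j <;>
        simp [hbF, hF.basis_apply, mul_assoc,
          hF.g_sq, hF.G_sq, hF.x_sq, hF.X_sq, hF.gg', hF.GG', hF.xx', hF.XX',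
          hF.xg, hF.xg', hF.gX_anticomm, hF.gX', hF.XG, hF.XG', hF.gG_comm, hF.gG',
          hF.xG_anticomm, hF.xG', hF.xX, hF.xX',
          hE.g_sq, hE.G_sq, hE.x_sq, hE.X_sq, hE.gg', hE.GG', hE.xx', hE.XX',
          hE.xg, hE.xg', hE.gX_anticomm, hE.gX', hE.XG, hE.XG', hE.gG_comm, hE.gG',
          hE.xG_anticomm, hE.xG', hE.xX, hE.xX',
          hφ1, hφg, hφx, hφgx, hφG, hφGg, hφGx, hφGgx,
          hφX, hφXg, hφXx, hφXgx, hφGX, hφGXg, hφGXx, hφGXgx,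
          mul_smul_comm, smul_mul_assoc, smul_smul, smul_sub, smul_add,
          mul_sub, sub_mul, mul_add, add_mul,
          inv_mul_cancel₀ hlam, mul_inv_cancel₀ hlam]
    intro b
    simpa using LinearMap.congr_fun this b
  have hmulx : ∀ b : F, φ (x₁ * b) = x * φ b := by
    have : (φ.toLinearMap ∘ₗ LinearMap.mulLeft k x₁) =
        (LinearMap.mulLeft k (x) ∘ₗ φ.toLinearMap) := by
      apply bF.ext
      rintro ⟨i, j⟩
      fin_cases i <;> fin_cases j <;>
        simp [hbF, hF.basis_apply, mul_assoc,
          hF.g_sq, hF.G_sq, hF.x_sq, hF.X_sq, hF.gg', hF.GG', hF.xx', hF.XX',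
          hF.xg, hF.xg', hF.gX_anticomm, hF.gX', hF.XG, hF.XG', hF.gG_comm, hF.gG',
          hF.xG_anticomm, hF.xG', hF.xX, hF.xX',
          hE.g_sq, hE.G_sq, hE.x_sq, hE.X_sq, hE.gg', hE.GG', hE.xx', hE.XX',
          hE.xg, hE.xg', hE.gX_anticomm, hE.gX', hE.XG, hE.XG', hE.gG_comm, hE.gG',
          hE.xG_anticomm, hE.xG', hE.xX, hE.xX',
          hφ1, hφg, hφx, hφgx, hφG, hφGg, hφGx, hφGgx,
          hφX, hφXg, hφXx, hφXgx, hφGX, hφGXg, hφGXx, hφGXgx,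
          mul_smul_comm, smul_mul_assoc, smul_smul, smul_sub, smul_add,
          mul_sub, sub_mul, mul_add, add_mul,
          inv_mul_cancel₀ hlam, mul_inv_cancel₀ hlam]
    intro b
    simpa using LinearMap.congr_fun this b
  have hmulG : ∀ b : F, φ (G₁ * b) = G * φ b := by
    have : (φ.toLinearMap ∘ₗ LinearMap.mulLeft k G₁) =
        (LinearMap.mulLeft k (G) ∘ₗ φ.toLinearMap) := by
      apply bF.ext
      rintro ⟨i, j⟩
      fin_cases i <;> fin_cases j <;>
        simp [hbF, hF.basis_apply, mul_assoc,
          hF.g_sq, hF.G_sq, hF.x_sq, hF.X_sq, hF.gg', hF.GG', hF.xx', hF.XX',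
          hF.xg, hF.xg', hF.gX_anticomm, hF.gX', hF.XG, hF.XG', hF.gG_comm, hF.gG',
          hF.xG_anticomm, hF.xG', hF.xX, hF.xX',
          hE.g_sq, hE.G_sq, hE.x_sq, hE.X_sq, hE.gg', hE.GG', hE.xx', hE.XX',
          hE.xg, hE.xg', hE.gX_anticomm, hE.gX', hE.XG, hE.XG', hE.gG_comm, hE.gG',
          hE.xG_anticomm, hE.xG', hE.xX, hE.xX',
          hφ1, hφg, hφx, hφgx, hφG, hφGg, hφGx, hφGgx,
          hφX, hφXg, hφXx, hφXgx, hφGX, hφGXg, hφGXx, hφGXgx,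
          mul_smul_comm, smul_mul_assoc, smul_smul, smul_sub, smul_add,
          mul_sub, sub_mul, mul_add, add_mul,
          inv_mul_cancel₀ hlam, mul_inv_cancel₀ hlam]
    intro b
    simpa using LinearMap.congr_fun this b
  have hmulX : ∀ b : F, φ (X₁ * b) = (lam⁻¹ • X) * φ b := by
    have : (φ.toLinearMap ∘ₗ LinearMap.mulLeft k X₁) =
        (LinearMap.mulLeft k ((lam⁻¹ • X)) ∘ₗ φ.toLinearMap) := by
      apply bF.ext
      rintro ⟨i, j⟩
      fin_cases i <;> fin_cases j <;>
        simp [hbF, hF.basis_apply, mul_assoc,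
          hF.g_sq, hF.G_sq, hF.x_sq, hF.X_sq, hF.gg', hF.GG', hF.xx', hF.XX',
          hF.xg, hF.xg', hF.gX_anticomm, hF.gX', hF.XG, hF.XG', hF.gG_comm, hF.gG',
          hF.xG_anticomm, hF.xG', hF.xX, hF.xX',
          hE.g_sq, hE.G_sq, hE.x_sq, hE.X_sq, hE.gg', hE.GG', hE.xx', hE.XX',
          hE.xg, hE.xg', hE.gX_anticomm, hE.gX', hE.XG, hE.XG', hE.gG_comm, hE.gG',
          hE.xG_anticomm, hE.xG', hE.xX, hE.xX',
          hφ1, hφg, hφx, hφgx, hφG, hφGg, hφGx, hφGgx,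
          hφX, hφXg, hφXx, hφXgx, hφGX, hφGXg, hφGXx, hφGXgx,
          mul_smul_comm, smul_mul_assoc, smul_smul, smul_sub, smul_add,
          mul_sub, sub_mul, mul_add, add_mul,
          inv_mul_cancel₀ hlam, mul_inv_cancel₀ hlam]
    intro b
    simpa using LinearMap.congr_fun this b
  have hmono : ∀ (p : Fin 4 × Fin 4) (b : F),
      φ ((![(1 : F), G₁, X₁, G₁ * X₁] p.1 * ![(1 : F), g₁, x₁, g₁ * x₁] p.2) * b) =
      φ (![(1 : F), G₁, X₁, G₁ * X₁] p.1 * ![(1 : F), g₁, x₁, g₁ * x₁] p.2) * φ b := by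
    rintro ⟨i, j⟩ b
    fin_cases i <;> fin_cases j <;>
      simp [mul_assoc, hmulg, hmulx, hmulG, hmulX, hφ1, hφg, hφx, hφG, hφX,
        smul_mul_assoc, mul_smul_comm]
  have hmul : ∀ a b : F, φ (a * b) = φ a * φ b := by
    intro a b
    have hmem : a ∈ Submodule.span k (Set.range fun p : Fin 4 × Fin 4 =>
        ![(1 : F), G₁, X₁, G₁ * X₁] p.1 * ![(1 : F), g₁, x₁, g₁ * x₁] p.2) := by
      rw [hF.span]; trivial
    induction hmem using Submodule.span_induction with
    | mem a ha => obtain ⟨p, rfl⟩ := ha; exact hmono p b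
    | zero => simp
    | add a c _ _ ha hc => simp [add_mul, ha, hc]
    | smul r a _ ha => simp [smul_mul_assoc, ha]
  have hcounit : (Coalgebra.counit (R := k) (A := E)) ∘ₗ φ.toLinearMap =
      (Coalgebra.counit (R := k) (A := F)) := by
    apply bF.ext
    rintro ⟨i, j⟩
    fin_cases i <;> fin_cases j <;>
      simp [hbF, hF.basis_apply, mul_assoc, hφ1, hφg, hφx, hφgx, hφG, hφGg, hφGx, hφGgx,
        hφX, hφXg, hφXx, hφXgx, hφGX, hφGXg, hφGXx, hφGXgx,
        hE.counit_g, hE.counit_G, hE.counit_x, hE.counit_X,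
        hF.counit_g, hF.counit_G, hF.counit_x, hF.counit_X]
  have hcomul : TensorProduct.map φ.toLinearMap φ.toLinearMap ∘ₗ
      (Coalgebra.comul (R := k) (A := F)) =
      (Coalgebra.comul (R := k) (A := E)) ∘ₗ φ.toLinearMap := by
    apply bF.ext
    rintro ⟨i, j⟩
    fin_cases i <;> fin_cases j <;>
      simp [hbF, hF.basis_apply, mul_assoc, hφ1, hφg, hφx, hφgx, hφG, hφGg, hφGx, hφGgx,
        hφX, hφXg, hφXx, hφXgx, hφGX, hφGXg, hφGXx, hφGXgx,
        hF.comul_g, hF.comul_G, hF.comul_x, hF.comul_X,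
        hE.comul_g, hE.comul_G, hE.comul_x, hE.comul_X,
        Algebra.TensorProduct.tmul_mul_tmul, Algebra.TensorProduct.one_def,
        TensorProduct.tmul_add, TensorProduct.add_tmul, TensorProduct.tmul_sub,
        TensorProduct.sub_tmul, TensorProduct.neg_tmul, TensorProduct.tmul_neg,
        TensorProduct.smul_tmul', TensorProduct.tmul_smul,
        hF.g_sq, hF.G_sq, hF.x_sq, hF.X_sq, hF.gg', hF.GG', hF.xx', hF.XX',
        hF.xg, hF.xg', hF.gX_anticomm, hF.gX', hF.XG, hF.XG', hF.gG_comm, hF.gG',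
        hF.xG_anticomm, hF.xG', hF.xX, hF.xX',
        hE.g_sq, hE.G_sq, hE.x_sq, hE.X_sq, hE.gg', hE.GG', hE.xx', hE.XX',
        hE.xg, hE.xg', hE.gX_anticomm, hE.gX', hE.XG, hE.XG', hE.gG_comm, hE.gG',
        hE.xG_anticomm, hE.xG', hE.xX, hE.xX',
        mul_smul_comm, smul_mul_assoc, smul_smul, smul_sub, smul_add,
        mul_sub, sub_mul, mul_add, add_mul,
        inv_mul_cancel₀ hlam, mul_inv_cancel₀ hlam]
  let ch : F →ₗc[k] E :=
    { toLinearMap := φ.toLinearMap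
      counit_comp := hcounit
      map_comp_comul := hcomul }
  let ψ : F ≃ₐc[k] E :=
    { toCoalgHom := ch
      invFun := φ.symm
      left_inv := φ.left_inv
      right_inv := φ.right_inv
      map_mul' := hmul }
  exact ⟨ψ, hφg, hφx, hφG, hφX⟩

end
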